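/- Define S(m) for a positive integer m by S(1) = 1 and S(m) = Σ p_i^{α_i} where m = Π p_i^{α_i} is the prime factorization. Then the alternating group A_n contains an element of order m if and only if S(m) ≤ n when m is odd, and S(m) ≤ n − 2 when m is even. -/

import Mathlib

open Multiset in
lemma mylcm_ne_zero : ∀ (C : Multiset ℕ), (∀ a ∈ C, a ≠ 0) → C.lcm ≠ 0 := by
  intro C
  induction C using Multiset.induction_on with
  | empty => simp
  | cons a C ih =>
    intro h
    rw [Multiset.lcm_cons]
    have ha : a ≠ 0 := h a (Multiset.mem_cons_self a C)
    have hC : C.lcm ≠ 0 := ih fun b hb => h b (Multiset.mem_cons_of_mem hb)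
    simpa [lcm_eq_nat_lcm, Nat.lcm_ne_zero] using Nat.lcm_ne_zero ha hC

lemma exists_pow_dvd_of_dvd_lcm : ∀ (C : Multiset ℕ), (∀ a ∈ C, a ≠ 0) →
    ∀ (p k : ℕ), p.Prime → k ≠ 0 → p ^ k ∣ C.lcm → ∃ a ∈ C, p ^ k ∣ a := by
  intro C
  induction C using Multiset.induction_on with
  | empty =>
    intro _ p k hp hk hd
    simp only [Multiset.lcm_zero] at hd
    exact absurd (Nat.le_of_dvd one_pos hd) (not_le.2 (Nat.one_lt_pow hk hp.one_lt))
  | cons a C ih =>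
    intro h0 p k hp hk hd
    have ha : a ≠ 0 := h0 a (Multiset.mem_cons_self a C)
    have hC0 : ∀ b ∈ C, b ≠ 0 := fun b hb => h0 b (Multiset.mem_cons_of_mem hb)
    have hL : C.lcm ≠ 0 := mylcm_ne_zero C hC0
    rw [Multiset.lcm_cons] at hd
    have hlcm0 : Nat.lcm a C.lcm ≠ 0 := Nat.lcm_ne_zero ha hL
    rw [show (lcm a C.lcm) = Nat.lcm a C.lcm from lcm_eq_nat_lcm _ _] at hd
    rw [hp.pow_dvd_iff_le_factorization hlcm0, Nat.factorization_lcm ha hL,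
      Finsupp.sup_apply, le_sup_iff] at hd
    rcases hd with hd | hd
    · exact ⟨a, Multiset.mem_cons_self a C, (hp.pow_dvd_iff_le_factorization ha).2 hd⟩
    · obtain ⟨b, hb, hdb⟩ := ih hC0 p k hp hk ((hp.pow_dvd_iff_le_factorization hL).2 hd)
      exact ⟨b, Multiset.mem_cons_of_mem hb, hdb⟩


lemma sum_le_prod' (P : Finset ℕ) (f : ℕ → ℕ) (hf : ∀ p ∈ P, 2 ≤ f p) :
    ∑ p ∈ P, f p ≤ ∏ p ∈ P, f p := by
  induction P using Finset.induction_on with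
  | empty => simp
  | insert a P hnot ih =>
    rw [Finset.sum_insert hnot, Finset.prod_insert hnot]
    rcases P.eq_empty_or_nonempty with rfl | ⟨b, hb⟩
    · simp
    · have h2 : 2 ≤ ∏ p ∈ P, f p :=
        le_trans (hf b (Finset.mem_insert_of_mem hb))
          (Finset.single_le_prod' (f := f) (fun i hi => le_trans one_le_two
            (hf i (Finset.mem_insert_of_mem hi))) hb)
      have := Nat.add_le_mul (hf a (Finset.mem_insert_self a P)) h2
      have hih := ih fun p hp => hf p (Finset.mem_insert_of_mem hp)
      omega

lemma prod_pow_dvd (a : ℕ) (ha : a ≠ 0) (P : Finset ℕ) (f : ℕ → ℕ)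
    (hP : ∀ p ∈ P, p.Prime) (hf : ∀ p ∈ P, 1 ≤ f p) (hdvd : ∀ p ∈ P, p ^ f p ∣ a) :
    ∏ p ∈ P, p ^ f p ∣ a := by
  have hsubset : P ⊆ a.primeFactors := by
    intro p hp
    refine Nat.mem_primeFactors.2 ⟨hP p hp, ?_, ha⟩
    exact dvd_trans (dvd_pow_self p (Nat.one_le_iff_ne_zero.1 (hf p hp))) (hdvd p hp)
  calc ∏ p ∈ P, p ^ f p ∣ ∏ p ∈ P, p ^ a.factorization p :=
        Finset.prod_dvd_prod_of_dvd _ _ (fun p hp => pow_dvd_pow p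
          (((hP p hp).pow_dvd_iff_le_factorization ha).1 (hdvd p hp)))
    _ ∣ ∏ p ∈ a.primeFactors, p ^ a.factorization p :=
        Finset.prod_dvd_prod_of_subset _ _ _ hsubset
    _ = a := Nat.factorization_prod_pow_eq_self ha

lemma key1 (a : ℕ) (ha : a ≠ 0) (P : Finset ℕ) (f : ℕ → ℕ)
    (hP : ∀ p ∈ P, p.Prime) (hf : ∀ p ∈ P, 1 ≤ f p) (hdvd : ∀ p ∈ P, p ^ f p ∣ a) :
    ∑ p ∈ P, p ^ f p ≤ a := by
  refine le_trans (sum_le_prod' P _ fun p hp => ?_)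
    (Nat.le_of_dvd (Nat.pos_of_ne_zero ha) (prod_pow_dvd a ha P f hP hf hdvd))
  calc 2 ≤ p := (hP p hp).two_le
    _ ≤ p ^ f p := Nat.le_self_pow (Nat.one_le_iff_ne_zero.1 (hf p hp)) p

lemma key2 (a : ℕ) (haeven : a % 2 = 0) (ha2 : 2 ≤ a) (P : Finset ℕ) (f : ℕ → ℕ)
    (hP : ∀ p ∈ P, p.Prime) (h2P : 2 ∉ P) (hf : ∀ p ∈ P, 1 ≤ f p)
    (hdvd : ∀ p ∈ P, p ^ f p ∣ a) :
    ∑ p ∈ P, p ^ f p + 2 ≤ a := by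
  have ha : a ≠ 0 := by omega
  rcases P.eq_empty_or_nonempty with rfl | ⟨b, hb⟩
  · simpa using ha2
  have hprod : ∏ p ∈ P, p ^ f p ∣ a := prod_pow_dvd a ha P f hP hf hdvd
  have hcop : Nat.Coprime 2 (∏ p ∈ P, p ^ f p) := by
    refine Nat.Coprime.prod_right fun p hp => Nat.Coprime.pow_right _ ?_
    have := (hP p hp).two_le
    have hne : p ≠ 2 := fun h => h2P (h ▸ hp)
    exact (Nat.coprime_primes Nat.prime_two (hP p hp)).2 (Ne.symm hne)
  have h2dvd : 2 ∣ a := Nat.dvd_of_mod_eq_zero haeven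
  have hmul : 2 * ∏ p ∈ P, p ^ f p ∣ a := Nat.Coprime.mul_dvd_of_dvd_of_dvd hcop h2dvd hprod
  have hle : 2 * ∏ p ∈ P, p ^ f p ≤ a := Nat.le_of_dvd (Nat.pos_of_ne_zero ha) hmul
  have hsum : ∑ p ∈ P, p ^ f p ≤ ∏ p ∈ P, p ^ f p := by
    refine sum_le_prod' P _ fun p hp => ?_
    calc 2 ≤ p := (hP p hp).two_le
      _ ≤ p ^ f p := Nat.le_self_pow (Nat.one_le_iff_ne_zero.1 (hf p hp)) p
  have hb2 : 2 ≤ ∏ p ∈ P, p ^ f p := by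
    refine le_trans ?_ (Finset.single_le_prod' (f := fun p => p ^ f p)
      (fun i hi => Nat.one_le_iff_ne_zero.2 (pow_ne_zero _ (hP i hi).ne_zero)) hb)
    calc 2 ≤ b := (hP b hb).two_le
      _ ≤ b ^ f b := Nat.le_self_pow (Nat.one_le_iff_ne_zero.1 (hf b hb)) b
  omega

lemma L1 : ∀ (C : Multiset ℕ) (P : Finset ℕ) (f : ℕ → ℕ),
    (∀ a ∈ C, 2 ≤ a) →
    (∀ p ∈ P, p.Prime ∧ 1 ≤ f p ∧ ∃ a ∈ C, p ^ f p ∣ a) →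
    ∑ p ∈ P, p ^ f p ≤ C.sum := by
  intro C
  induction C using Multiset.induction_on with
  | empty =>
    intro P f _ hP
    have hPe : P = ∅ := Finset.eq_empty_of_forall_notMem fun p hp => by
      obtain ⟨-, -, x, hx, -⟩ := hP p hp; exact absurd hx (Multiset.notMem_zero x)
    simp [hPe]
  | cons a C ih =>
    intro P f h2 hP
    classical
    have ha : a ≠ 0 := by have := h2 a (Multiset.mem_cons_self a C); omega
    rw [Multiset.sum_cons, ← Finset.sum_filter_add_sum_filter_not P (fun p => p ^ f p ∣ a)]
    have h1 : ∑ p ∈ P.filter (fun p => p ^ f p ∣ a), p ^ f p ≤ a := by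
      refine key1 a ha _ f (fun p hp => (hP p (Finset.mem_of_mem_filter p hp)).1)
        (fun p hp => (hP p (Finset.mem_of_mem_filter p hp)).2.1)
        (fun p hp => (Finset.mem_filter.1 hp).2)
    have h2' : ∑ p ∈ P.filter (fun p => ¬ p ^ f p ∣ a), p ^ f p ≤ C.sum := by
      refine ih _ f (fun b hb => h2 b (Multiset.mem_cons_of_mem hb)) (fun p hp => ?_)
      obtain ⟨hpr, hfp, x, hx, hdx⟩ := hP p (Finset.mem_of_mem_filter p hp)
      refine ⟨hpr, hfp, x, ?_, hdx⟩
      rcases Multiset.mem_cons.1 hx with rfl | hx'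
      · exact absurd hdx (Finset.mem_filter.1 hp).2
      · exact hx'
    omega

lemma L3 : ∀ (C : Multiset ℕ) (P : Finset ℕ) (f : ℕ → ℕ),
    (∀ a ∈ C, 2 ≤ a) →
    (∀ p ∈ P, p.Prime ∧ 1 ≤ f p ∧ ∃ a ∈ C, p ^ f p ∣ a) →
    2 ∉ P → (∃ a ∈ C, a % 2 = 0) →
    ∑ p ∈ P, p ^ f p + 2 ≤ C.sum := by
  intro C
  induction C using Multiset.induction_on with
  | empty =>
    rintro P f _ _ _ ⟨a, ha, -⟩
    exact absurd ha (Multiset.notMem_zero a)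
  | cons a C ih =>
    intro P f h2 hP h2P heven
    classical
    have ha2 : 2 ≤ a := h2 a (Multiset.mem_cons_self a C)
    have ha : a ≠ 0 := by omega
    rw [Multiset.sum_cons, ← Finset.sum_filter_add_sum_filter_not P (fun p => p ^ f p ∣ a)]
    have hPa' : ∀ p ∈ P.filter (fun p => ¬ p ^ f p ∣ a),
        p.Prime ∧ 1 ≤ f p ∧ ∃ x ∈ C, p ^ f p ∣ x := by
      intro p hp
      obtain ⟨hpr, hfp, x, hx, hdx⟩ := hP p (Finset.mem_of_mem_filter p hp)
      refine ⟨hpr, hfp, x, ?_, hdx⟩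
      rcases Multiset.mem_cons.1 hx with rfl | hx'
      · exact absurd hdx (Finset.mem_filter.1 hp).2
      · exact hx'
    have h2C : ∀ b ∈ C, 2 ≤ b := fun b hb => h2 b (Multiset.mem_cons_of_mem hb)
    by_cases haeven : a % 2 = 0
    · have h1 : ∑ p ∈ P.filter (fun p => p ^ f p ∣ a), p ^ f p + 2 ≤ a := by
        refine key2 a haeven ha2 _ f (fun p hp => (hP p (Finset.mem_of_mem_filter p hp)).1)
          (fun h => h2P (Finset.mem_of_mem_filter 2 h))
          (fun p hp => (hP p (Finset.mem_of_mem_filter p hp)).2.1)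
          (fun p hp => (Finset.mem_filter.1 hp).2)
      have h2' := L1 C _ f h2C hPa'
      omega
    · have h1 : ∑ p ∈ P.filter (fun p => p ^ f p ∣ a), p ^ f p ≤ a := by
        refine key1 a ha _ f (fun p hp => (hP p (Finset.mem_of_mem_filter p hp)).1)
          (fun p hp => (hP p (Finset.mem_of_mem_filter p hp)).2.1)
          (fun p hp => (Finset.mem_filter.1 hp).2)
      have hevC : ∃ b ∈ C, b % 2 = 0 := by
        obtain ⟨b, hb, hbe⟩ := heven
        rcases Multiset.mem_cons.1 hb with rfl | hb'
        · exact absurd hbe haeven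
        · exact ⟨b, hb', hbe⟩
      have h2' := ih _ f h2C hPa' (fun h => h2P (Finset.mem_of_mem_filter 2 h)) hevC
      omega

lemma L2 : ∀ (C : Multiset ℕ) (P : Finset ℕ) (f : ℕ → ℕ),
    (∀ a ∈ C, 2 ≤ a) →
    (∀ p ∈ P, p.Prime ∧ 1 ≤ f p ∧ ∃ a ∈ C, p ^ f p ∣ a) →
    2 ≤ C.countP (fun a => a % 2 = 0) →
    ∑ p ∈ P, p ^ f p + 2 ≤ C.sum := by
  intro C
  induction C using Multiset.induction_on with
  | empty => intro P f _ _ hc; simp at hc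
  | cons a C ih =>
    intro P f h2 hP hcount
    classical
    have ha2 : 2 ≤ a := h2 a (Multiset.mem_cons_self a C)
    have ha : a ≠ 0 := by omega
    have h2C : ∀ b ∈ C, 2 ≤ b := fun b hb => h2 b (Multiset.mem_cons_of_mem hb)
    rw [Multiset.countP_cons] at hcount
    rw [Multiset.sum_cons, ← Finset.sum_filter_add_sum_filter_not P (fun p => p ^ f p ∣ a)]
    have hPa' : ∀ p ∈ P.filter (fun p => ¬ p ^ f p ∣ a),
        p.Prime ∧ 1 ≤ f p ∧ ∃ x ∈ C, p ^ f p ∣ x := by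
      intro p hp
      obtain ⟨hpr, hfp, x, hx, hdx⟩ := hP p (Finset.mem_of_mem_filter p hp)
      refine ⟨hpr, hfp, x, ?_, hdx⟩
      rcases Multiset.mem_cons.1 hx with rfl | hx'
      · exact absurd hdx (Finset.mem_filter.1 hp).2
      · exact hx'
    by_cases haeven : a % 2 = 0
    · by_cases h2a : 2 ∈ P.filter (fun p => p ^ f p ∣ a)
      · -- prime 2 used by a; other even element in C
        have h1 : ∑ p ∈ P.filter (fun p => p ^ f p ∣ a), p ^ f p ≤ a := by
          refine key1 a ha _ f (fun p hp => (hP p (Finset.mem_of_mem_filter p hp)).1)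
            (fun p hp => (hP p (Finset.mem_of_mem_filter p hp)).2.1)
            (fun p hp => (Finset.mem_filter.1 hp).2)
        have h2nP' : 2 ∉ P.filter (fun p => ¬ p ^ f p ∣ a) := by
          intro h
          exact (Finset.mem_filter.1 h).2 (Finset.mem_filter.1 h2a).2
        have hcnt : 1 ≤ C.countP (fun a => a % 2 = 0) := by
          simp [haeven] at hcount; omega
        have hevC : ∃ b ∈ C, b % 2 = 0 := Multiset.countP_pos.mp (by omega)
        have h2' := L3 C _ f h2C hPa' h2nP' hevC
        omega
      · have h1 : ∑ p ∈ P.filter (fun p => p ^ f p ∣ a), p ^ f p + 2 ≤ a := by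
          refine key2 a haeven ha2 _ f (fun p hp => (hP p (Finset.mem_of_mem_filter p hp)).1)
            h2a (fun p hp => (hP p (Finset.mem_of_mem_filter p hp)).2.1)
            (fun p hp => (Finset.mem_filter.1 hp).2)
        have h2' := L1 C _ f h2C hPa'
        omega
    · have h1 : ∑ p ∈ P.filter (fun p => p ^ f p ∣ a), p ^ f p ≤ a := by
        refine key1 a ha _ f (fun p hp => (hP p (Finset.mem_of_mem_filter p hp)).1)
          (fun p hp => (hP p (Finset.mem_of_mem_filter p hp)).2.1)
          (fun p hp => (Finset.mem_filter.1 hp).2)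
      have hcnt : 2 ≤ C.countP (fun a => a % 2 = 0) := by
        simp [haeven] at hcount; omega
      have h2' := ih _ f h2C hPa' hcnt
      omega


lemma parityLemma : ∀ C : Multiset ℕ,
    C.countP (fun a => a % 2 = 0) % 2 = (C.sum + Multiset.card C) % 2 := by
  intro C
  induction C using Multiset.induction_on with
  | empty => simp
  | cons a C ih =>
    rw [Multiset.countP_cons, Multiset.sum_cons, Multiset.card_cons]
    by_cases h : a % 2 = 0 <;> simp [h] <;> omega

lemma bridge (n m : ℕ) :
    (∃ σ : alternatingGroup (Fin n), orderOf σ = m) ↔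
    ∃ C : Multiset ℕ, (∀ a ∈ C, 2 ≤ a) ∧ C.sum ≤ n ∧ C.lcm = m ∧
      Even (C.sum + Multiset.card C) := by
  constructor
  · rintro ⟨σ, hσ⟩
    set g : Equiv.Perm (Fin n) := (σ : Equiv.Perm (Fin n)) with hg
    have hord : orderOf g = m := by rw [Subgroup.orderOf_coe]; exact hσ
    refine ⟨g.cycleType, fun a ha => Equiv.Perm.two_le_of_mem_cycleType ha, ?_, ?_, ?_⟩
    · rw [Equiv.Perm.sum_cycleType]
      simpa using (g.support.card_le_univ)
    · rw [Equiv.Perm.lcm_cycleType]; exact hord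
    · have hsign : Equiv.Perm.sign g = 1 := Equiv.Perm.mem_alternatingGroup.1 σ.2
      rw [Equiv.Perm.sign_of_cycleType] at hsign
      by_contra hodd
      rw [Nat.not_even_iff_odd] at hodd
      rw [hodd.neg_one_pow] at hsign
      exact (by decide : ¬((-1 : ℤˣ) = 1)) hsign
  · rintro ⟨C, h2, hsum, hlcm, hpar⟩
    obtain ⟨g, hg⟩ := (Equiv.Perm.exists_with_cycleType_iff (Fin n)).2
      ⟨by simpa using hsum, h2⟩
    have hsign : Equiv.Perm.sign g = 1 := by
      rw [Equiv.Perm.sign_of_cycleType, hg, Even.neg_one_pow hpar]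
    refine ⟨⟨g, Equiv.Perm.mem_alternatingGroup.2 hsign⟩, ?_⟩
    rw [Subgroup.orderOf_mk, ← Equiv.Perm.lcm_cycleType, hg, hlcm]


lemma C0_two_le (m : ℕ) (hm : m ≠ 0) :
    ∀ a ∈ Multiset.map (fun p => p ^ m.factorization p) m.primeFactors.val, 2 ≤ a := by
  intro a ha
  obtain ⟨p, hp, rfl⟩ := Multiset.mem_map.1 ha
  have hp' : p ∈ m.primeFactors := hp
  have hpr : p.Prime := Nat.prime_of_mem_primeFactors hp'
  have he : m.factorization p ≠ 0 := by
    rw [← Nat.support_factorization] at hp'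
    exact Finsupp.mem_support_iff.1 hp'
  calc 2 ≤ p := hpr.two_le
    _ ≤ p ^ m.factorization p := Nat.le_self_pow he p

lemma C0_sum (m : ℕ) :
    (Multiset.map (fun p => p ^ m.factorization p) m.primeFactors.val).sum
      = ∑ p ∈ m.primeFactors, p ^ m.factorization p := rfl

lemma C0_lcm (m : ℕ) (hm : m ≠ 0) :
    (Multiset.map (fun p => p ^ m.factorization p) m.primeFactors.val).lcm = m := by
  set C := Multiset.map (fun p => p ^ m.factorization p) m.primeFactors.val with hC
  have h0 : ∀ a ∈ C, a ≠ 0 := by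
    intro a ha
    have := C0_two_le m hm a ha
    omega
  have hL0 : C.lcm ≠ 0 := mylcm_ne_zero C h0
  apply Nat.dvd_antisymm
  · rw [Multiset.lcm_dvd]
    intro b hb
    obtain ⟨p, hp, rfl⟩ := Multiset.mem_map.1 hb
    exact Nat.ordProj_dvd m p
  · rw [← Nat.factorization_le_iff_dvd hm hL0, Finsupp.le_def]
    intro q
    by_cases hq : m.factorization q = 0
    · simp [hq]
    · have hq' : q ∈ m.primeFactors := by
        rw [← Nat.support_factorization]; exact Finsupp.mem_support_iff.2 hq
      have hqr : q.Prime := Nat.prime_of_mem_primeFactors hq'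
      have hmem : q ^ m.factorization q ∈ C :=
        Multiset.mem_map.2 ⟨q, hq', rfl⟩
      exact (hqr.pow_dvd_iff_le_factorization hL0).1 (Multiset.dvd_lcm hmem)

lemma C0_countP_odd (m : ℕ) (hm : m ≠ 0) (hmo : Odd m) :
    (Multiset.map (fun p => p ^ m.factorization p) m.primeFactors.val).countP
      (fun a => a % 2 = 0) = 0 := by
  rw [Multiset.countP_eq_zero]
  intro a ha
  obtain ⟨p, hp, rfl⟩ := Multiset.mem_map.1 ha
  have hp' : p ∈ m.primeFactors := hp
  have hpd : p ∣ m := Nat.dvd_of_mem_primeFactors hp'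
  have hpodd : Odd p := hmo.of_dvd_nat hpd
  have : Odd (p ^ m.factorization p) := hpodd.pow
  rw [Nat.odd_iff] at this
  omega

lemma C0_countP_even (m : ℕ) (hm : m ≠ 0) (hme : 2 ∣ m) :
    (Multiset.map (fun p => p ^ m.factorization p) m.primeFactors.val).countP
      (fun a => a % 2 = 0) = 1 := by
  rw [Multiset.countP_map]
  have hfe : m.primeFactors.filter (fun p => p ^ m.factorization p % 2 = 0) = {2} := by
    ext q
    simp only [Finset.mem_filter, Finset.mem_singleton]
    constructor
    · rintro ⟨hq, hqe⟩
      have hqr := Nat.prime_of_mem_primeFactors hq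
      have h2q : (2 : ℕ) ∣ q ^ m.factorization q := Nat.dvd_of_mod_eq_zero hqe
      have h2q' : (2 : ℕ) ∣ q := Nat.Prime.dvd_of_dvd_pow Nat.prime_two h2q
      exact ((Nat.prime_dvd_prime_iff_eq Nat.prime_two hqr).1 h2q').symm
    · rintro rfl
      have h2m : 2 ∈ m.primeFactors := Nat.mem_primeFactors.2 ⟨Nat.prime_two, hme, hm⟩
      have he : m.factorization 2 ≠ 0 := by
        rw [← Nat.support_factorization] at h2m
        exact Finsupp.mem_support_iff.1 h2m
      exact ⟨h2m, by have := dvd_pow_self 2 he; omega⟩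
  have hv : Multiset.filter (fun p => p ^ m.factorization p % 2 = 0) m.primeFactors.val
      = ({2} : Finset ℕ).val := by
    rw [← Finset.filter_val, hfe]
  rw [hv]
  rfl

/-- `Sfun m` is the sum of the maximal prime-power divisors of `m`, with `Sfun 1 = 1`. -/
def Sfun (m : ℕ) : ℕ :=
  if m = 1 then 1 else ∑ p ∈ m.primeFactors, p ^ m.factorization p

theorem stmt_4 (m n : ℕ) (hm : 1 ≤ m) (hn : 1 ≤ n) :
    (Odd m → ((∃ σ : alternatingGroup (Fin n), orderOf σ = m) ↔ Sfun m ≤ n)) ∧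
    (Even m → ((∃ σ : alternatingGroup (Fin n), orderOf σ = m) ↔ Sfun m ≤ n - 2)) := by
  classical
  have hm0 : m ≠ 0 := by omega
  by_cases hm1 : m = 1
  · subst hm1
    constructor
    · intro _
      constructor
      · intro _; simpa [Sfun] using hn
      · intro _; exact ⟨1, orderOf_one⟩
    · intro h; exact absurd h (by decide)
  · have hS : Sfun m = ∑ p ∈ m.primeFactors, p ^ m.factorization p := by
      rw [Sfun, if_neg hm1]
    have hwit : ∀ (C : Multiset ℕ), (∀ a ∈ C, 2 ≤ a) → C.lcm = m →
        ∀ p ∈ m.primeFactors,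
          p.Prime ∧ 1 ≤ m.factorization p ∧ ∃ a ∈ C, p ^ m.factorization p ∣ a := by
      intro C h2 hlcm p hp
      have hpr := Nat.prime_of_mem_primeFactors hp
      have hf1 : m.factorization p ≠ 0 := by
        rw [← Nat.support_factorization] at hp
        exact Finsupp.mem_support_iff.1 hp
      have h0C : ∀ a ∈ C, a ≠ 0 := fun a ha => by have := h2 a ha; omega
      obtain ⟨a, ha, hd⟩ := exists_pow_dvd_of_dvd_lcm C h0C p _ hpr hf1
        (hlcm ▸ Nat.ordProj_dvd m p)
      exact ⟨hpr, Nat.one_le_iff_ne_zero.2 hf1, a, ha, hd⟩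
    constructor
    · intro hodd
      rw [bridge, hS]
      constructor
      · rintro ⟨C, h2, hsum, hlcm, hpar⟩
        exact le_trans (L1 C m.primeFactors _ h2 (hwit C h2 hlcm)) hsum
      · intro hle
        refine ⟨Multiset.map (fun p => p ^ m.factorization p) m.primeFactors.val,
          C0_two_le m hm0, by rw [C0_sum]; exact hle, C0_lcm m hm0, ?_⟩
        have hp := parityLemma (Multiset.map (fun p => p ^ m.factorization p) m.primeFactors.val)
        rw [C0_countP_odd m hm0 hodd] at hp
        rw [Nat.even_iff]
        omega
    · intro heven
      have h2m : (2 : ℕ) ∣ m := heven.two_dvd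
      rw [bridge, hS]
      have hs2 : 2 ≤ ∑ p ∈ m.primeFactors, p ^ m.factorization p := by
        have h2mem : 2 ∈ m.primeFactors := Nat.mem_primeFactors.2 ⟨Nat.prime_two, h2m, hm0⟩
        have he2 : m.factorization 2 ≠ 0 := by
          rw [← Nat.support_factorization] at h2mem
          exact Finsupp.mem_support_iff.1 h2mem
        calc (2 : ℕ) ≤ 2 ^ m.factorization 2 := Nat.le_self_pow he2 2
          _ ≤ _ := Finset.single_le_sum (f := fun p => p ^ m.factorization p)
              (fun i _ => Nat.zero_le _) h2mem
      constructor
      · rintro ⟨C, h2, hsum, hlcm, hpar⟩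
        have h0C : ∀ a ∈ C, a ≠ 0 := fun a ha => by have := h2 a ha; omega
        have hcount : 2 ≤ C.countP (fun a => a % 2 = 0) := by
          have hpar2 := parityLemma C
          rw [Nat.even_iff] at hpar
          obtain ⟨a, ha, hda⟩ := exists_pow_dvd_of_dvd_lcm C h0C 2 1 Nat.prime_two
            one_ne_zero (by rw [hlcm]; simpa using h2m)
          have hpos : 0 < C.countP (fun a => a % 2 = 0) :=
            Multiset.countP_pos.2 ⟨a, ha, by omega⟩
          omega
        have hL2 := L2 C m.primeFactors _ h2 (hwit C h2 hlcm) hcount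
        omega
      · intro hle
        have hn4 : 4 ≤ n := by omega
        refine ⟨2 ::ₘ Multiset.map (fun p => p ^ m.factorization p) m.primeFactors.val,
          ?_, ?_, ?_, ?_⟩
        · intro a ha
          rcases Multiset.mem_cons.1 ha with rfl | ha'
          · exact le_refl 2
          · exact C0_two_le m hm0 a ha'
        · rw [Multiset.sum_cons, C0_sum]
          omega
        · rw [Multiset.lcm_cons, C0_lcm m hm0, lcm_eq_nat_lcm]
          exact Nat.dvd_antisymm (Nat.lcm_dvd h2m dvd_rfl) (Nat.dvd_lcm_right 2 m)
        · rw [Nat.even_iff, Multiset.sum_cons, Multiset.card_cons, C0_sum,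
            Multiset.card_map, ← Finset.card_def]
          have hp := parityLemma
            (2 ::ₘ Multiset.map (fun p => p ^ m.factorization p) m.primeFactors.val)
          rw [Multiset.countP_cons, C0_countP_even m hm0 h2m, Multiset.sum_cons,
            Multiset.card_cons, C0_sum] at hp
          norm_num at hp
          omega
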